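/- Equality holds in the bound Σ|γ_n|² ≤ ((β-α)²/(4π²))(π⁴/45 - Li₄(e^{-2πi(1-α)/(β-α)}) - Li₄(e^{2πi(1-α)/(β-α)})) for the function F_{α,β}(z) = z·exp(P̂_{α,β}(z)), whose logarithmic coefficients are γ_n = ((β-α)/(2πn²)) i (1 - e^{2πni(1-α)/(β-α)}). -/

import Mathlib

open Complex Metric

/-- The polylogarithm of order 4, `Li₄(z) = Σ_{n≥1} zⁿ/n⁴`. -/
noncomputable def Li4 (z : ℂ) : ℂ := ∑' n : ℕ, z ^ (n + 1) / ((n : ℂ) + 1) ^ 4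

/-- The Taylor coefficients of `P̂_{α,β}`. -/
noncomputable def PhatCoeff (α β : ℝ) (n : ℕ) : ℂ :=
  (((β : ℂ) - α) / (Real.pi * (n : ℂ) ^ 2)) * Complex.I *
    (1 - Complex.exp (2 * Real.pi * (n : ℂ) * Complex.I * (1 - (α : ℂ)) / ((β : ℂ) - α)))

/-- `P̂_{α,β}(z) = Σ_{n≥1} ((β-α)/(πn²)) i (1 - e^{2πni(1-α)/(β-α)}) zⁿ`. -/
noncomputable def Phat (α β : ℝ) (z : ℂ) : ℂ :=
  ∑' n : ℕ, PhatCoeff α β (n + 1) * z ^ (n + 1)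

/- ### Auxiliary lemmas -/

lemma norm_one_sub_exp_sq (x : ℝ) :
    ‖1 - Complex.exp (x * Complex.I)‖ ^ 2 = 2 - 2 * Real.cos x := by
  rw [Complex.sq_norm, Complex.normSq_apply]
  simp only [Complex.sub_re, Complex.sub_im, Complex.one_re, Complex.one_im,
    Complex.exp_ofReal_mul_I_re, Complex.exp_ofReal_mul_I_im]
  nlinarith [Real.sin_sq_add_cos_sq x]

lemma hasSum_inv_pow_four : HasSum (fun n : ℕ => 1 / ((n:ℝ)+1)^4) (Real.pi^4/90) := by
  have h := hasSum_zeta_four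
  have := (hasSum_nat_add_iff (f := fun n : ℕ => (1:ℝ)/(n:ℝ)^4) 1).mpr (by simpa using h)
  simpa using this

lemma Li4_term_eq (x : ℝ) (n : ℕ) :
    Complex.exp (x * Complex.I) ^ (n+1) / ((n:ℂ)+1)^4
      = ((1/((n:ℝ)+1)^4 : ℝ) : ℂ) * Complex.exp ((x*((n:ℝ)+1) : ℝ) * Complex.I) := by
  rw [← Complex.exp_nat_mul]
  push_cast
  rw [div_eq_mul_inv]
  ring_nf

lemma hasSum_Li4 (x : ℝ) :
    HasSum (fun n : ℕ => Complex.exp (x * Complex.I) ^ (n+1) / ((n:ℂ)+1)^4)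
      (Li4 (Complex.exp (x * Complex.I))) := by
  have hs : Summable (fun n : ℕ => Complex.exp (x * Complex.I) ^ (n+1) / ((n:ℂ)+1)^4) := by
    apply Summable.of_norm
    have key : ∀ n : ℕ, ‖Complex.exp (x * Complex.I) ^ (n+1) / ((n:ℂ)+1)^4‖ = 1/((n:ℝ)+1)^4 := by
      intro n
      rw [norm_div, norm_pow, Complex.norm_exp_ofReal_mul_I, one_pow]
      congr 1
      have : ((n:ℂ)+1)^4 = (((((n:ℝ)+1)^4 : ℝ)) : ℂ) := by push_cast; ring
      rw [this, Complex.norm_real, Real.norm_of_nonneg (by positivity)]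
    rw [funext key]
    exact hasSum_inv_pow_four.summable
  exact hs.hasSum

lemma hasSum_Li4_re (x : ℝ) :
    HasSum (fun n : ℕ => Real.cos (x*((n:ℝ)+1)) / ((n:ℝ)+1)^4)
      ((Li4 (Complex.exp (x * Complex.I))).re) := by
  have h := (hasSum_Li4 x).mapL Complex.reCLM
  refine HasSum.congr_fun h fun n => ?_
  simp only [Complex.reCLM_apply, Li4_term_eq x n, Complex.re_ofReal_mul,
    Complex.exp_ofReal_mul_I_re]
  ring

lemma phatCoeff_zero (α β : ℝ) : PhatCoeff α β 0 = 0 := by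
  simp [PhatCoeff]

lemma phat_exponent_eq (α β : ℝ) (n : ℕ) :
    2 * (Real.pi:ℂ) * (n : ℂ) * Complex.I * (1 - (α : ℂ)) / ((β : ℂ) - α)
      = ((2 * Real.pi * (1 - α) / (β - α) * n : ℝ) : ℂ) * Complex.I := by
  push_cast
  ring

lemma phatCoeff_norm_le {α β : ℝ} (hαβ : α < β) (n : ℕ) :
    ‖PhatCoeff α β n‖ ≤ 2 * (β - α) / Real.pi := by
  have hπ := Real.pi_pos
  have hba : (0:ℝ) < β - α := sub_pos.mpr hαβ
  rcases Nat.eq_zero_or_pos n with h | h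
  · subst h; rw [phatCoeff_zero]; simp; positivity
  · rw [PhatCoeff, phat_exponent_eq]
    rw [norm_mul, norm_mul, Complex.norm_I, mul_one]
    have h1 : ‖1 - Complex.exp (((2 * Real.pi * (1 - α) / (β - α) * n : ℝ)) * Complex.I)‖ ≤ 2 := by
      refine (norm_sub_le _ _).trans ?_
      rw [norm_one, Complex.norm_exp_ofReal_mul_I]
      norm_num
    have h2 : ‖((β : ℂ) - α) / (Real.pi * (n : ℂ) ^ 2)‖ ≤ (β - α) / Real.pi := by
      have : ((β : ℂ) - α) / (Real.pi * (n : ℂ) ^ 2) = (((β - α) / (Real.pi * (n:ℝ)^2) : ℝ) : ℂ) := by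
        push_cast; ring
      rw [this, Complex.norm_real, Real.norm_of_nonneg (by positivity)]
      rw [div_le_div_iff₀ (by positivity) hπ]
      have hn : (1:ℝ) ≤ (n:ℝ)^2 := by
        have : (1:ℝ) ≤ (n:ℝ) := by exact_mod_cast h
        nlinarith
      nlinarith [mul_le_mul_of_nonneg_left hn (le_of_lt (mul_pos hba hπ))]
    calc ‖((β : ℂ) - α) / (Real.pi * (n : ℂ) ^ 2)‖ * ‖1 - Complex.exp _‖
        ≤ ((β - α) / Real.pi) * 2 := by
          exact mul_le_mul h2 h1 (norm_nonneg _) (by positivity)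
      _ = 2 * (β - α) / Real.pi := by ring

lemma hasSum_phat {α β : ℝ} (hαβ : α < β) {y : ℂ} (hy : ‖y‖ < 1) :
    HasSum (fun n : ℕ => PhatCoeff α β n * y ^ n) (Phat α β y) := by
  have hs : Summable (fun n : ℕ => PhatCoeff α β n * y ^ n) := by
    apply Summable.of_norm
    apply Summable.of_nonneg_of_le (fun n => norm_nonneg _)
      (fun n => ?_) (summable_geometric_of_lt_one (norm_nonneg y) hy |>.mul_left
        (2 * (β - α) / Real.pi))
    rw [norm_mul, norm_pow]
    exact mul_le_mul_of_nonneg_right (phatCoeff_norm_le hαβ n) (by positivity)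
  have := hs.hasSum
  have ht : ∑' n : ℕ, PhatCoeff α β n * y ^ n = Phat α β y := by
    rw [Summable.tsum_eq_zero_add hs, phatCoeff_zero]
    simp [Phat]
  rwa [ht] at this

lemma phat_norm_le {α β : ℝ} (hαβ : α < β) {y : ℂ} (hy : ‖y‖ ≤ 1/2) :
    ‖Phat α β y‖ ≤ 2 * (2 * (β - α) / Real.pi) * ‖y‖ := by
  have hπ := Real.pi_pos
  have hba : (0:ℝ) < β - α := sub_pos.mpr hαβ
  set C : ℝ := 2 * (β - α) / Real.pi with hCdef
  have hC : 0 < C := by positivity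
  have hy1 : ‖y‖ < 1 := lt_of_le_of_lt hy (by norm_num)
  have h := (hasSum_phat hαβ hy1)
  have hPhat : Phat α β y = ∑' n : ℕ, PhatCoeff α β (n+1) * y ^ (n+1) := by
    rw [← h.tsum_eq, Summable.tsum_eq_zero_add h.summable, phatCoeff_zero]
    simp
  have hbound : ∀ n : ℕ, ‖PhatCoeff α β (n+1) * y ^ (n+1)‖ ≤ (C * ‖y‖) * (1/2)^n := by
    intro n
    rw [norm_mul, norm_pow, pow_succ]
    calc ‖PhatCoeff α β (n+1)‖ * (‖y‖ ^ n * ‖y‖)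
        ≤ C * ((1/2)^n * ‖y‖) := by
          refine mul_le_mul (phatCoeff_norm_le hαβ _) ?_ (by positivity) hC.le
          exact mul_le_mul_of_nonneg_right (pow_le_pow_left₀ (norm_nonneg y) hy n) (norm_nonneg y)
      _ = (C * ‖y‖) * (1/2)^n := by ring
  have hsum2 : Summable (fun n : ℕ => (C * ‖y‖) * (1/2:ℝ)^n) :=
    (summable_geometric_of_lt_one (by norm_num) (by norm_num)).mul_left _
  have hs : Summable (fun n : ℕ => ‖PhatCoeff α β (n+1) * y ^ (n+1)‖) :=
    Summable.of_nonneg_of_le (fun n => norm_nonneg _) hbound hsum2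
  rw [hPhat]
  calc ‖∑' n : ℕ, PhatCoeff α β (n+1) * y ^ (n+1)‖
      ≤ ∑' n : ℕ, ‖PhatCoeff α β (n+1) * y ^ (n+1)‖ := norm_tsum_le_tsum_norm hs
    _ ≤ ∑' n : ℕ, (C * ‖y‖) * (1/2:ℝ)^n := Summable.tsum_le_tsum hbound hs hsum2
    _ = (C * ‖y‖) * (1 - 1/2)⁻¹ := by
        rw [tsum_mul_left, tsum_geometric_of_lt_one (by norm_num) (by norm_num)]
    _ = 2 * C * ‖y‖ := by norm_num; ring

lemma coeff_eq {α β : ℝ} (hαβ : α < β) (γ : ℕ → ℂ)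
    (hγ : ∀ z ∈ ball (0 : ℂ) 1, z ≠ 0 →
      HasSum (fun n : ℕ => 2 * γ (n + 1) * z ^ (n + 1))
        (Complex.log ((z * Complex.exp (Phat α β z)) / z))) :
    ∀ n : ℕ, 1 ≤ n → 2 * γ n = PhatCoeff α β n := by
  have hπ := Real.pi_pos
  have hba : (0:ℝ) < β - α := sub_pos.mpr hαβ
  set C : ℝ := 2 * (β - α) / Real.pi with hCdef
  have hC : 0 < C := by positivity
  set r : ℝ := min (1/2) (Real.pi / (4 * C)) with hrdef
  have hr : 0 < r := lt_min (by norm_num) (by positivity)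
  have hr2 : r ≤ 1/2 := min_le_left _ _
  have hr3 : 2 * C * r < Real.pi := by
    have : r ≤ Real.pi / (4 * C) := min_le_right _ _
    calc 2 * C * r ≤ 2 * C * (Real.pi / (4 * C)) := by
          exact mul_le_mul_of_nonneg_left this (by positivity)
      _ = Real.pi / 2 := by field_simp; ring
      _ < Real.pi := by linarith
  set cG : ℕ → ℂ := fun n => if n = 0 then 0 else 2 * γ n with hcGdef
  have key : ∀ y : ℂ, ‖y‖ < r → HasSum (fun n : ℕ => cG n * y ^ n) (Phat α β y) := by
    intro y hy
    rcases eq_or_ne y 0 with rfl | hy0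
    · have h0 : Phat α β 0 = 0 := by
        have := (hasSum_phat hαβ (y := 0) (by norm_num)).tsum_eq
        rw [← this, Summable.tsum_eq_zero_add (hasSum_phat hαβ (y := 0) (by norm_num)).summable]
        simp [phatCoeff_zero]
      rw [h0]
      have : (fun n : ℕ => cG n * (0:ℂ) ^ n) = fun _ => 0 := by
        funext n
        rcases Nat.eq_zero_or_pos n with h | h
        · subst h; simp [hcGdef]
        · simp [zero_pow h.ne']
      rw [this]
      exact hasSum_zero
    · have hy1 : y ∈ ball (0:ℂ) 1 := by
        rw [mem_ball_zero_iff]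
        calc ‖y‖ < r := hy
          _ ≤ 1/2 := hr2
          _ < 1 := by norm_num
      have h1 := hγ y hy1 hy0
      have harg : (y * Complex.exp (Phat α β y)) / y = Complex.exp (Phat α β y) :=
        mul_div_cancel_left₀ _ hy0
      have hnorm : ‖Phat α β y‖ < Real.pi := by
        calc ‖Phat α β y‖ ≤ 2 * C * ‖y‖ := phat_norm_le hαβ (le_of_lt (lt_of_lt_of_le hy hr2))
          _ < 2 * C * r := by
              exact mul_lt_mul_of_pos_left hy (by positivity)
          _ < Real.pi := hr3
      have habs : |(Phat α β y).im| < Real.pi := by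
        refine lt_of_le_of_lt (Complex.abs_im_le_norm _) ?_
        exact hnorm
      obtain ⟨him1, him2⟩ := abs_lt.mp habs
      rw [harg, Complex.log_exp him1 him2.le] at h1
      have h2 : HasSum (fun n : ℕ => cG (n+1) * y ^ (n+1)) (Phat α β y) := by
        refine h1.congr_fun fun n => ?_
        simp [hcGdef]
      have h3 := (hasSum_nat_add_iff (f := fun n : ℕ => cG n * y ^ n) 1).mp h2
      simpa [hcGdef] using h3
  set pG := FormalMultilinearSeries.ofScalars ℂ cG with hpGdef
  set pA := FormalMultilinearSeries.ofScalars ℂ (PhatCoeff α β) with hpAdef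
  set rn : NNReal := (r/2).toNNReal with hrndef
  have hrn : (rn : ℝ) = r/2 := Real.coe_toNNReal _ (by positivity)
  have hrnpos : 0 < rn := by
    rw [← NNReal.coe_lt_coe, hrn]; positivity
  have hGradius : (rn : ENNReal) ≤ pG.radius := by
    apply FormalMultilinearSeries.le_radius_of_tendsto (l := 0)
    have hz : ‖((r/2 : ℝ) : ℂ)‖ = r/2 := by
      rw [Complex.norm_real, Real.norm_of_nonneg (by positivity)]
    have hsum := (key ((r/2 : ℝ) : ℂ) (by rw [hz]; linarith)).summable
    have ht := hsum.tendsto_atTop_zero.norm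
    simp only [norm_zero] at ht
    refine ht.congr fun n => ?_
    rw [norm_mul, norm_pow, hz, FormalMultilinearSeries.ofScalars_norm, hrn]
  have hG : HasFPowerSeriesOnBall (Phat α β) pG 0 rn := by
    refine ⟨hGradius, by exact_mod_cast hrnpos, ?_⟩
    intro y hy
    rw [EMetric.mem_ball, edist_zero_right, enorm_eq_nnnorm] at hy
    have hy' : ‖y‖ < r/2 := by
      rw [← hrn]
      exact_mod_cast hy
    rw [zero_add]
    refine (key y (by linarith)).congr_fun fun n => ?_
    rw [FormalMultilinearSeries.ofScalars_apply_eq, smul_eq_mul]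
  have hA : HasFPowerSeriesOnBall (Phat α β) pA 0 rn := by
    refine ⟨?_, by exact_mod_cast hrnpos, ?_⟩
    · apply FormalMultilinearSeries.le_radius_of_bound (C := C)
      intro n
      rw [FormalMultilinearSeries.ofScalars_norm]
      calc ‖PhatCoeff α β n‖ * (rn : ℝ) ^ n ≤ C * 1 := by
            refine mul_le_mul (phatCoeff_norm_le hαβ n) ?_ (by positivity) hC.le
            apply pow_le_one₀ (by positivity)
            rw [hrn]; linarith
        _ = C := mul_one C
    · intro y hy
      rw [EMetric.mem_ball, edist_zero_right, enorm_eq_nnnorm] at hy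
      have hy' : ‖y‖ < r/2 := by
        rw [← hrn]
        exact_mod_cast hy
      rw [zero_add]
      refine (hasSum_phat hαβ (by linarith)).congr_fun fun n => ?_
      rw [FormalMultilinearSeries.ofScalars_apply_eq, smul_eq_mul]
  have hpeq : pG = pA := hG.hasFPowerSeriesAt.eq_formalMultilinearSeries hA.hasFPowerSeriesAt
  have hceq : cG = PhatCoeff α β :=
    (FormalMultilinearSeries.ofScalars_series_eq_iff ℂ cG (PhatCoeff α β)).mp hpeq
  intro n hn
  have := congrFun hceq n
  simp only [hcGdef] at this
  rwa [if_neg (by omega : ¬ n = 0)] at this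

/-- The extremal function `F_{α,β}(z) = z exp(P̂_{α,β}(z))` has logarithmic coefficients
`γ_n = ((β-α)/(2πn²)) i (1 - e^{2πni(1-α)/(β-α)})` and attains equality in the bound
`Σ |γ_n|² = ((β-α)²/(4π²))(π⁴/45 - Li₄(e^{-2πi(1-α)/(β-α)}) - Li₄(e^{2πi(1-α)/(β-α)}))`. -/
theorem logCoeff_extremal_S_alpha_beta (α β : ℝ) (hα : α < 1) (hβ : 1 < β)
    (γ : ℕ → ℂ)
    (hγ : ∀ z ∈ ball (0 : ℂ) 1, z ≠ 0 →
      HasSum (fun n : ℕ => 2 * γ (n + 1) * z ^ (n + 1))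
        (Complex.log ((z * Complex.exp (Phat α β z)) / z))) :
    (∀ n : ℕ, 1 ≤ n →
      γ n = (((β : ℂ) - α) / (2 * Real.pi * (n : ℂ) ^ 2)) * Complex.I *
        (1 - Complex.exp (2 * Real.pi * (n : ℂ) * Complex.I * (1 - (α : ℂ)) / ((β : ℂ) - α)))) ∧
    HasSum (fun n : ℕ => ‖γ (n + 1)‖ ^ 2)
      ((((((β : ℂ) - α) ^ 2) / (4 * (Real.pi : ℂ) ^ 2)) *
        ((Real.pi : ℂ) ^ 4 / 45 -
          Li4 (Complex.exp (-2 * Real.pi * Complex.I * (1 - (α : ℂ)) / ((β : ℂ) - α))) -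
          Li4 (Complex.exp (2 * Real.pi * Complex.I * (1 - (α : ℂ)) / ((β : ℂ) - α))))).re) := by
  have hαβ : α < β := hα.trans hβ
  have hπ := Real.pi_pos
  have hπ0 : (Real.pi : ℂ) ≠ 0 := Complex.ofReal_ne_zero.mpr Real.pi_ne_zero
  have hba : (0:ℝ) < β - α := sub_pos.mpr hαβ
  have h2γ := coeff_eq hαβ γ hγ
  have hpart1 : ∀ n : ℕ, 1 ≤ n →
      γ n = (((β : ℂ) - α) / (2 * Real.pi * (n : ℂ) ^ 2)) * Complex.I *
        (1 - Complex.exp (2 * Real.pi * (n : ℂ) * Complex.I * (1 - (α : ℂ)) / ((β : ℂ) - α))) := by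
    intro n hn
    have hnne : ((n : ℂ)) ≠ 0 := Nat.cast_ne_zero.mpr (by omega)
    have key : (2:ℂ) * ((((β : ℂ) - α) / (2 * Real.pi * (n : ℂ) ^ 2)) * Complex.I *
        (1 - Complex.exp (2 * Real.pi * (n : ℂ) * Complex.I * (1 - (α : ℂ)) / ((β : ℂ) - α))))
        = PhatCoeff α β n := by
      rw [PhatCoeff]
      field_simp
    exact mul_left_cancel₀ two_ne_zero ((h2γ n hn).trans key.symm)
  refine ⟨hpart1, ?_⟩
  -- Part 2
  set t : ℝ := 2 * Real.pi * (1 - α) / (β - α) with htdef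
  set K : ℝ := (β - α)^2 / (4 * Real.pi^2) with hKdef
  -- rewrite the goal's value
  have hexp1 : -2 * (Real.pi:ℂ) * Complex.I * (1 - (α : ℂ)) / ((β : ℂ) - α)
      = ((-t : ℝ) : ℂ) * Complex.I := by
    rw [htdef]; push_cast; ring
  have hexp2 : 2 * (Real.pi:ℂ) * Complex.I * (1 - (α : ℂ)) / ((β : ℂ) - α)
      = ((t : ℝ) : ℂ) * Complex.I := by
    rw [htdef]; push_cast; ring
  have hKc : (((β : ℂ) - α) ^ 2) / (4 * (Real.pi : ℂ) ^ 2) = ((K : ℝ) : ℂ) := by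
    rw [hKdef]; push_cast; ring
  have hπ4 : ((Real.pi : ℂ)) ^ 4 / 45 = (((Real.pi^4/45 : ℝ)) : ℂ) := by
    push_cast; ring
  rw [hexp1, hexp2, hKc, hπ4]
  have hre : ((((K : ℝ) : ℂ)) * ((((Real.pi^4/45 : ℝ)) : ℂ) -
      Li4 (Complex.exp (((-t : ℝ) : ℂ) * Complex.I)) -
      Li4 (Complex.exp (((t : ℝ) : ℂ) * Complex.I)))).re
      = K * ((2 * (Real.pi^4/90) - (Li4 (Complex.exp (((-t : ℝ) : ℂ) * Complex.I))).re)
          - (Li4 (Complex.exp (((t : ℝ) : ℂ) * Complex.I))).re) := by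
    rw [Complex.re_ofReal_mul]
    simp only [Complex.sub_re, Complex.ofReal_re]
    ring
  rw [hre]
  -- now a real computation
  have hA := hasSum_Li4_re t
  have hB := hasSum_Li4_re (-t)
  have H := (((hasSum_inv_pow_four.mul_left 2).sub hB).sub hA).mul_left K
  refine H.congr_fun fun n => ?_
  -- pointwise identity
  have hm : (1:ℕ) ≤ n + 1 := le_add_self
  have hγn := hpart1 (n+1) hm
  have hfac : (((β : ℂ) - α) / (2 * Real.pi * ((n+1 : ℕ) : ℂ) ^ 2))
      = (((β - α) / (2 * Real.pi * ((n:ℝ)+1)^2) : ℝ) : ℂ) := by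
    push_cast; ring
  have hexp3 : 2 * (Real.pi:ℂ) * ((n+1 : ℕ) : ℂ) * Complex.I * (1 - (α : ℂ)) / ((β : ℂ) - α)
      = ((t * ((n:ℝ)+1) : ℝ) : ℂ) * Complex.I := by
    rw [htdef]; push_cast; ring
  rw [hγn, hfac, hexp3, norm_mul, norm_mul, Complex.norm_I, mul_one, Complex.norm_real,
    mul_pow, Real.norm_eq_abs, norm_one_sub_exp_sq,
    abs_of_pos (div_pos hba (by positivity))]
  have hcos : Real.cos (-t * ((n:ℝ)+1)) = Real.cos (t * ((n:ℝ)+1)) := by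
    rw [neg_mul, Real.cos_neg]
  rw [hcos]
  have hne : ((n:ℝ)+1) ≠ 0 := by positivity
  rw [hKdef]
  field_simp
  ring
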